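/- Every finite collection of triangles in the plane with pairwise disjoint interiors, where any two triangles intersect in a common vertex, a common edge, or not at all, admits a 3-coloring: a function assigning each triangle one of 3 colors such that any two triangles sharing an edge receive different colors. -/

import Mathlib

open scoped Classical

/-- A nondegenerate triangle in the plane, given by its vertex set. -/
def IsTriangle (V : Finset (EuclideanSpace ℝ (Fin 2))) : Prop :=
  V.card = 3 ∧ AffineIndependent ℝ (fun x : V => (x : EuclideanSpace ℝ (Fin 2)))

namespace TriColor

noncomputable section

abbrev E := EuclideanSpace ℝ (Fin 2)

/-- First generic coordinate. -/
def Uc (t : ℝ) (x : E) : ℝ := x 0 + t * x 1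
/-- Second generic coordinate. -/
def Wc (t : ℝ) (x : E) : ℝ := x 1 - t * x 0

lemma Uc_add (t : ℝ) (x y : E) : Uc t (x + y) = Uc t x + Uc t y := by
  simp [Uc, PiLp.add_apply]; ring
lemma Uc_smul (t c : ℝ) (x : E) : Uc t (c • x) = c * Uc t x := by
  simp [Uc, PiLp.smul_apply, smul_eq_mul]; ring
lemma Uc_sub (t : ℝ) (x y : E) : Uc t (x - y) = Uc t x - Uc t y := by
  simp [Uc, PiLp.sub_apply]; ring
lemma Wc_add (t : ℝ) (x y : E) : Wc t (x + y) = Wc t x + Wc t y := by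
  simp [Wc, PiLp.add_apply]; ring
lemma Wc_smul (t c : ℝ) (x : E) : Wc t (c • x) = c * Wc t x := by
  simp [Wc, PiLp.smul_apply, smul_eq_mul]; ring
lemma Wc_sub (t : ℝ) (x y : E) : Wc t (x - y) = Wc t x - Wc t y := by
  simp [Wc, PiLp.sub_apply]; ring

lemma UW_inj (t : ℝ) {x y : E} (hU : Uc t x = Uc t y) (hW : Wc t x = Wc t y) : x = y := by
  unfold Uc at hU
  unfold Wc at hW
  have hpos : (0:ℝ) < 1 + t^2 := by positivity
  have e0 : (x 0 - y 0) * (1 + t^2) = 0 := by linear_combination hU - t * hW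
  have e1 : (x 1 - y 1) * (1 + t^2) = 0 := by linear_combination hW + t * hU
  have h0 : x 0 = y 0 := by
    rcases mul_eq_zero.mp e0 with h | h
    · linarith
    · linarith
  have h1 : x 1 = y 1 := by
    rcases mul_eq_zero.mp e1 with h | h
    · linarith
    · linarith
  ext i
  fin_cases i <;> assumption

lemma tri_indep {V : Finset E} (h : IsTriangle V) {p q r : E}
    (hV : V = {p, q, r}) (hpq : p ≠ q) (hpr : p ≠ r) (hqr : q ≠ r) :
    AffineIndependent ℝ ![p, q, r] := by
  obtain ⟨-, hind⟩ := h
  have hp : p ∈ V := by simp [hV]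
  have hq : q ∈ V := by simp [hV]
  have hr : r ∈ V := by simp [hV]
  have hinj : Function.Injective (![⟨p, hp⟩, ⟨q, hq⟩, ⟨r, hr⟩] : Fin 3 → {x // x ∈ V}) := by
    intro i j hij
    fin_cases i <;> fin_cases j <;> simp_all [Subtype.ext_iff]
  have := hind.comp_embedding ⟨_, hinj⟩
  convert this using 1
  funext i; fin_cases i <;> rfl

def triBasis {p q r : E} (h : AffineIndependent ℝ ![p, q, r]) : AffineBasis (Fin 3) ℝ E :=
  ⟨![p, q, r], h, by
    rw [h.affineSpan_eq_top_iff_card_eq_finrank_add_one]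
    simp [finrank_euclideanSpace_fin]⟩

@[simp] lemma triBasis_apply {p q r : E} (h : AffineIndependent ℝ ![p, q, r]) :
    ⇑(triBasis h) = ![p, q, r] := rfl

lemma range_tri (p q r : E) : Set.range ![p, q, r] = ({p, q, r} : Set E) := by
  ext x
  constructor
  · rintro ⟨i, rfl⟩; fin_cases i <;> simp
  · rintro (rfl | rfl | rfl)
    exacts [⟨0, rfl⟩, ⟨1, rfl⟩, ⟨2, rfl⟩]

lemma mem_interior_tri {p q r : E} (h : AffineIndependent ℝ ![p, q, r]) {a b c : ℝ}
    (hsum : a + b + c = 1) (h0 : 0 < a) (h1 : 0 < b) (h2 : 0 < c) :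
    a • p + b • q + c • r ∈ interior (convexHull ℝ ({p, q, r} : Set E)) := by
  have hb := (triBasis h).interior_convexHull
  rw [triBasis_apply, range_tri] at hb
  rw [hb]
  intro i
  set w : Fin 3 → ℝ := ![a, b, c] with hwdef
  have hw' : ∑ j, w j = 1 := by rw [Fin.sum_univ_three]; simpa [hwdef] using hsum
  have hcomb : (Finset.univ.affineCombination ℝ ![p, q, r] w) = a • p + b • q + c • r := by
    rw [Finset.affineCombination_eq_linear_combination _ _ _ hw']
    simp [Fin.sum_univ_three, hwdef]
  have := (triBasis h).coord_apply_combination_of_mem (Finset.mem_univ i) hw'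
  rw [triBasis_apply] at this
  rw [← hcomb, this]
  fin_cases i <;> simpa [hwdef]

lemma affine_expand {p q r : E}
    (B : AffineBasis (Fin 3) ℝ E) (hB : ⇑B = ![p, q, r]) (f : E →ᵃ[ℝ] ℝ) (x : E) :
    f x = B.coord 0 x * f p + B.coord 1 x * f q + B.coord 2 x * f r := by
  have hw : ∑ i, B.coord i x = 1 := B.sum_coord_apply_eq_one x
  conv_lhs => rw [← B.affineCombination_coord_eq_self x]
  rw [Finset.map_affineCombination _ _ _ hw f,
    Finset.affineCombination_eq_linear_combination _ _ _ hw]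
  simp [Fin.sum_univ_three, hB]

lemma not_mem_span_pair {p q x : E} (hx : AffineIndependent ℝ ![p, q, x]) :
    x ∉ affineSpan ℝ ({p, q} : Set E) := by
  have h2 := hx.notMem_affineSpan_diff 2 Set.univ
  have himg : ![p, q, x] '' (Set.univ \ {2}) = ({p, q} : Set E) := by
    ext y
    constructor
    · rintro ⟨i, hi, rfl⟩
      fin_cases i <;> simp_all
    · rintro (rfl | rfl)
      · exact ⟨0, by simp, rfl⟩
      · exact ⟨1, by simp, rfl⟩
  rwa [himg] at h2

lemma coord2_ne_zero {p q r : E}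
    (B : AffineBasis (Fin 3) ℝ E) (hB : ⇑B = ![p, q, r]) {x : E}
    (hx : AffineIndependent ℝ ![p, q, x]) : B.coord 2 x ≠ 0 := by
  intro h0
  have hw : ∑ i, B.coord i x = 1 := B.sum_coord_apply_eq_one x
  set c0 := B.coord 0 x with hc0
  set c1 := B.coord 1 x with hc1
  have hxc : x = c0 • p + c1 • q := by
    have h1 : (Finset.univ.affineCombination ℝ ⇑B fun i => B.coord i x) = x :=
      B.affineCombination_coord_eq_self x
    rw [hB, Finset.affineCombination_eq_linear_combination _ _ _ hw] at h1
    rw [← h1]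
    simp [Fin.sum_univ_three, h0, ← hc0, ← hc1]
  have hsum : c0 + c1 = 1 := by
    rw [Fin.sum_univ_three, h0, add_zero] at hw
    exact hw
  have hline : x = AffineMap.lineMap p q c1 := by
    rw [AffineMap.lineMap_apply_module, hxc]
    have : c0 = 1 - c1 := by linarith
    rw [this]
  exact not_mem_span_pair hx (hline ▸ AffineMap.lineMap_mem_affineSpan_pair _ _ _)

/-- If `x` has positive third barycentric coordinate w.r.t. the triangle `(p, q, y)`,
then the triangles `pqx`, `pqy` have intersecting interiors. -/
lemma interiors_meet {p q x y : E} (hx : AffineIndependent ℝ ![p, q, x])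
    (hy : AffineIndependent ℝ ![p, q, y])
    (hpos : 0 < (triBasis hy).coord 2 x) :
    ∃ z, z ∈ interior (convexHull ℝ ({p, q, x} : Set E)) ∧
      z ∈ interior (convexHull ℝ ({p, q, y} : Set E)) := by
  set B := triBasis hy with hBdef
  set α := B.coord 0 x with hα
  set β := B.coord 1 x with hβ
  set γ := B.coord 2 x with hγ
  have hsum : α + β + γ = 1 := by
    have := B.sum_coord_apply_eq_one x
    rw [Fin.sum_univ_three] at this
    exact this
  have hxc : x = α • p + β • q + γ • y := by
    have h1 : (Finset.univ.affineCombination ℝ ⇑B fun i => B.coord i x) = x :=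
      B.affineCombination_coord_eq_self x
    have hw : ∑ i, B.coord i x = 1 := B.sum_coord_apply_eq_one x
    rw [show ⇑B = ![p, q, y] from rfl,
      Finset.affineCombination_eq_linear_combination _ _ _ hw] at h1
    rw [← h1]
    simp [Fin.sum_univ_three, ← hα, ← hβ, ← hγ]
  set ε : ℝ := min (1/2) (1/(4*(|α| + |β| + 1))) with hε
  have hM : (0:ℝ) < |α| + |β| + 1 := by positivity
  have hε0 : 0 < ε := by
    apply lt_min (by norm_num)
    positivity
  have hεh : ε ≤ 1/2 := min_le_left _ _
  have hεM : ε * (|α| + |β| + 1) ≤ 1/4 := by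
    have h2 : ε ≤ 1/(4*(|α| + |β| + 1)) := min_le_right _ _
    rw [le_div_iff₀ (by positivity)] at h2
    nlinarith
  refine ⟨((1-ε)/2) • p + ((1-ε)/2) • q + ε • x, ?_, ?_⟩
  · exact mem_interior_tri hx (by ring) (by linarith) (by linarith) hε0
  · have hz : ((1-ε)/2) • p + ((1-ε)/2) • q + ε • x
        = ((1-ε)/2 + ε*α) • p + ((1-ε)/2 + ε*β) • q + (ε*γ) • y := by
      rw [hxc]; module
    rw [hz]
    have habs_a : -(ε*|α|) ≤ ε*α := by nlinarith [neg_abs_le α, hε0.le]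
    have habs_b : -(ε*|β|) ≤ ε*β := by nlinarith [neg_abs_le β, hε0.le]
    have h1 : 0 < (1-ε)/2 + ε*α := by nlinarith [abs_nonneg α, abs_nonneg β]
    have h2 : 0 < (1-ε)/2 + ε*β := by nlinarith [abs_nonneg α, abs_nonneg β]
    exact mem_interior_tri hy (by ring_nf; nlinarith [hsum]) h1 h2 (by positivity)

/-- Two triangles with a common vertex `v` whose angular intervals at `v`
(in "slope" coordinates) overlap have intersecting interiors.
Hypotheses are phrased multiplicatively: `w• < s * u•` says the slope is `< s`. -/
lemma cone_overlap (t : ℝ) {v a b c d : E}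
    (hT : AffineIndependent ℝ ![v, a, b]) (hW : AffineIndependent ℝ ![v, c, d]) (s : ℝ)
    (hua : 0 < Uc t v - Uc t a) (hub : 0 < Uc t v - Uc t b)
    (huc : 0 < Uc t v - Uc t c) (hud : 0 < Uc t v - Uc t d)
    (hsa : Wc t a - Wc t v < s * (Uc t v - Uc t a))
    (hsb : s * (Uc t v - Uc t b) < Wc t b - Wc t v)
    (hsc : Wc t c - Wc t v < s * (Uc t v - Uc t c))
    (hsd : s * (Uc t v - Uc t d) < Wc t d - Wc t v) :
    ∃ z, z ∈ interior (convexHull ℝ ({v, a, b} : Set E)) ∧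
      z ∈ interior (convexHull ℝ ({v, c, d} : Set E)) := by
  set ua := Uc t v - Uc t a with hua'
  set ub := Uc t v - Uc t b with hub'
  set uc := Uc t v - Uc t c with huc'
  set ud := Uc t v - Uc t d with hud'
  set wa := Wc t a - Wc t v with hwa'
  set wb := Wc t b - Wc t v with hwb'
  set wc := Wc t c - Wc t v with hwc'
  set wd := Wc t d - Wc t v with hwd'
  set β := wb - s * ub with hβ'
  set γ := s * ua - wa with hγ'
  set β' := wd - s * ud with hβ''
  set γ' := s * uc - wc with hγ''
  have hβ0 : 0 < β := by simp [hβ']; linarith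
  have hγ0 : 0 < γ := by simp [hγ']; linarith
  have hβ'0 : 0 < β' := by simp [hβ'']; linarith
  have hγ'0 : 0 < γ' := by simp [hγ'']; linarith
  set e1 : E := β • (a - v) + γ • (b - v) with he1
  set e2 : E := β' • (c - v) + γ' • (d - v) with he2
  have hUe1 : Uc t e1 = -(β * ua + γ * ub) := by
    rw [he1, Uc_add, Uc_smul, Uc_smul, Uc_sub, Uc_sub, hua', hub']; ring
  have hUe2 : Uc t e2 = -(β' * uc + γ' * ud) := by
    rw [he2, Uc_add, Uc_smul, Uc_smul, Uc_sub, Uc_sub, huc', hud']; ring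
  have hWe1 : Wc t e1 = s * (β * ua + γ * ub) := by
    rw [he1, Wc_add, Wc_smul, Wc_smul, Wc_sub, Wc_sub, ← hwa', ← hwb', hβ', hγ']; ring
  have hWe2 : Wc t e2 = s * (β' * uc + γ' * ud) := by
    rw [he2, Wc_add, Wc_smul, Wc_smul, Wc_sub, Wc_sub, ← hwc', ← hwd', hβ'', hγ'']; ring
  set D1 := β * ua + γ * ub with hD1
  set D2 := β' * uc + γ' * ud with hD2
  have hD10 : 0 < D1 := by positivity
  have hD20 : 0 < D2 := by positivity
  set lam := D2 / D1 with hlam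
  have hlam0 : 0 < lam := by positivity
  have he21 : e2 = lam • e1 := by
    apply UW_inj t
    · rw [Uc_smul, hUe1, hUe2, hlam]; field_simp
    · rw [Wc_smul, hWe1, hWe2, hlam]; field_simp
  clear_value ua ub uc ud wa wb wc wd β γ β' γ' e1 e2 D1 D2 lam
  clear hUe1 hUe2 hWe1 hWe2 hD1 hD2 hlam hD10 hD20 hua hub huc hud hsa hsb hsc hsd
  clear hua' hub' huc' hud' hwa' hwb' hwc' hwd' hβ' hγ' hβ'' hγ''
  obtain ⟨μ, hμ0, hμ1, hν1'⟩ :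
      ∃ μ : ℝ, 0 < μ ∧ μ * (β + γ) ≤ 1 / 2 ∧ μ * (β' + γ') ≤ lam / 2 := by
    refine ⟨min (1 / (2 * (β + γ))) (lam / (2 * (β' + γ'))),
      lt_min (by positivity) (by positivity), ?_, ?_⟩
    · have h : min (1 / (2 * (β + γ))) (lam / (2 * (β' + γ'))) ≤ 1 / (2 * (β + γ)) :=
        min_le_left _ _
      rw [le_div_iff₀ (by positivity)] at h
      nlinarith
    · have h : min (1 / (2 * (β + γ))) (lam / (2 * (β' + γ'))) ≤ lam / (2 * (β' + γ')) :=
        min_le_right _ _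
      rw [le_div_iff₀ (by positivity)] at h
      nlinarith
  set ν := μ / lam with hν
  have hν0 : 0 < ν := by positivity
  have hν1 : ν * (β' + γ') ≤ 1 / 2 := by
    rw [hν, div_mul_eq_mul_div, div_le_iff₀ hlam0]
    nlinarith
  have hμlam : ν * lam = μ := by
    rw [hν]; field_simp
  clear_value ν
  refine ⟨v + μ • e1, ?_, ?_⟩
  · have hz : v + μ • e1 = (1 - μ*β - μ*γ) • v + (μ*β) • a + (μ*γ) • b := by
      rw [he1]; module
    rw [hz]
    exact mem_interior_tri hT (by ring) (by nlinarith) (by positivity) (by positivity)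
  · have hμν : μ • e1 = ν • e2 := by
      rw [he21, smul_smul, hν]
      congr 1
      field_simp
    have hz : v + μ • e1 = (1 - ν*β' - ν*γ') • v + (ν*β') • c + (ν*γ') • d := by
      rw [hμν, he2]; module
    rw [hz]
    exact mem_interior_tri hW (by ring) (by nlinarith) (by positivity) (by positivity)

/-- Of three triangles sharing the edge `pq`, two have intersecting interiors. -/
lemma three_share_edge {p q r1 r2 r3 : E}
    (h1 : AffineIndependent ℝ ![p, q, r1]) (h2 : AffineIndependent ℝ ![p, q, r2])
    (h3 : AffineIndependent ℝ ![p, q, r3]) :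
    (∃ z, z ∈ interior (convexHull ℝ ({p, q, r1} : Set E)) ∧
        z ∈ interior (convexHull ℝ ({p, q, r2} : Set E))) ∨
    (∃ z, z ∈ interior (convexHull ℝ ({p, q, r1} : Set E)) ∧
        z ∈ interior (convexHull ℝ ({p, q, r3} : Set E))) ∨
    (∃ z, z ∈ interior (convexHull ℝ ({p, q, r2} : Set E)) ∧
        z ∈ interior (convexHull ℝ ({p, q, r3} : Set E))) := by
  set B1 := triBasis h1 with hB1def
  have hB1 : ⇑B1 = ![p, q, r1] := rfl
  have hc2 : B1.coord 2 r2 ≠ 0 := coord2_ne_zero B1 hB1 h2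
  have hc3 : B1.coord 2 r3 ≠ 0 := coord2_ne_zero B1 hB1 h3
  rcases hc2.lt_or_gt with hc2n | hc2p
  · rcases hc3.lt_or_gt with hc3n | hc3p
    · -- both negative: r2 and r3 on the same side
      right; right
      set B3 := triBasis h3 with hB3def
      have hB3 : ⇑B3 = ![p, q, r3] := rfl
      set f : E →ᵃ[ℝ] ℝ := B3.coord 2 with hfdef
      have hfp : f p = 0 := by
        have := B3.coord_apply (i := 2) (j := 0)
        simpa [hB3] using this
      have hfq : f q = 0 := by
        have := B3.coord_apply (i := 2) (j := 1)
        simpa [hB3] using this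
      have hfr3 : f r3 = 1 := by
        have := B3.coord_apply (i := 2) (j := 2)
        simpa [hB3] using this
      have e3 := affine_expand B1 hB1 f r3
      have e2 := affine_expand B1 hB1 f r2
      simp only [hfp, hfq, hfr3] at e3 e2
      have hκ : f r1 < 0 := by nlinarith
      have hpos : 0 < B3.coord 2 r2 := by
        have : f r2 = B1.coord 2 r2 * f r1 := by linarith
        have : 0 < f r2 := by nlinarith
        exact this
      obtain ⟨z, hz2, hz3⟩ := interiors_meet h2 h3 hpos
      exact ⟨z, hz2, hz3⟩
    · -- c3 > 0 : r3 with r1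
      right; left
      obtain ⟨z, hz3, hz1⟩ := interiors_meet h3 h1 hc3p
      exact ⟨z, hz1, hz3⟩
  · -- c2 > 0 : r2 with r1
    left
    obtain ⟨z, hz2, hz1⟩ := interiors_meet h2 h1 hc2p
    exact ⟨z, hz1, hz2⟩

lemma pair_sub {s : Finset E} {v a b : E} (hsub : s ⊆ {v, a, b}) (hcard : s.card = 2) :
    s = {v, a} ∨ s = {v, b} ∨ s = {a, b} := by
  obtain ⟨x, y, hxy, rfl⟩ := Finset.card_eq_two.mp hcard
  have hx : x = v ∨ x = a ∨ x = b := by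
    have := hsub (Finset.mem_insert_self x {y})
    simpa using this
  have hy : y = v ∨ y = a ∨ y = b := by
    have : y ∈ ({x, y} : Finset E) := by simp
    simpa using hsub this
  rcases hx with rfl | rfl | rfl <;> rcases hy with rfl | rfl | rfl <;>
    first
      | exact absurd rfl hxy
      | exact Or.inl rfl
      | exact Or.inr (Or.inl rfl)
      | exact Or.inr (Or.inr rfl)
      | exact Or.inl (Finset.pair_comm _ _)
      | exact Or.inr (Or.inl (Finset.pair_comm _ _))
      | exact Or.inr (Or.inr (Finset.pair_comm _ _))

lemma slope_ne (t : ℝ) {v x y : E} (h : AffineIndependent ℝ ![v, x, y])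
    (hux : 0 < Uc t v - Uc t x) (huy : 0 < Uc t v - Uc t y) :
    (Wc t x - Wc t v) / (Uc t v - Uc t x) ≠ (Wc t y - Wc t v) / (Uc t v - Uc t y) := by
  intro heq
  set s := (Wc t x - Wc t v) / (Uc t v - Uc t x) with hs
  have hwx : Wc t x - Wc t v = s * (Uc t v - Uc t x) := by
    rw [hs]; field_simp
  have hwy : Wc t y - Wc t v = s * (Uc t v - Uc t y) := by
    rw [heq]; field_simp
  set k := (Uc t v - Uc t y) / (Uc t v - Uc t x) with hk
  have hy' : y = k • (x - v) + v := by
    apply UW_inj t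
    · rw [Uc_add, Uc_smul, Uc_sub, hk]
      field_simp
      ring
    · rw [Wc_add, Wc_smul, Wc_sub, hk]
      have hx' : Wc t x = s * (Uc t v - Uc t x) + Wc t v := by linarith
      have hy'' : Wc t y = s * (Uc t v - Uc t y) + Wc t v := by linarith
      rw [hx', hy'']
      field_simp
      ring
  have hline : y = AffineMap.lineMap v x k := by
    rw [AffineMap.lineMap_apply_module, hy']; module
  exact not_mem_span_pair h (hline ▸ AffineMap.lineMap_mem_affineSpan_pair _ _ _)

lemma exists_good_t (P : Finset E) :
    ∃ t : ℝ, ∀ p ∈ P, ∀ q ∈ P, p ≠ q → Uc t p ≠ Uc t q := by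
  classical
  set F : Finset ℝ := (P ×ˢ P).image (fun pq => (pq.2 0 - pq.1 0) / (pq.1 1 - pq.2 1)) with hF
  obtain ⟨t, ht⟩ := Infinite.exists_notMem_finset F
  refine ⟨t, fun p hp q hq hpq hU => ?_⟩
  unfold Uc at hU
  by_cases h1 : p 1 = q 1
  · have h0 : p 0 = q 0 := by rw [h1] at hU; linarith
    exact hpq (by ext i; fin_cases i <;> assumption)
  · apply ht
    rw [hF]
    apply Finset.mem_image.mpr
    refine ⟨(p, q), Finset.mem_product.mpr ⟨hp, hq⟩, ?_⟩
    show (q 0 - p 0) / (p 1 - q 1) = t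
    rw [div_eq_iff (sub_ne_zero.mpr h1)]
    linarith

lemma decomp_at {V : Finset E} (hV : V.card = 3) {v b : E} (hvV : v ∈ V) (hb : b ∈ V.erase v) :
    ∃ a, a ≠ b ∧ v ≠ a ∧ v ≠ b ∧ V = {v, a, b} := by
  have h2 : (V.erase v).card = 2 := by rw [Finset.card_erase_of_mem hvV, hV]
  obtain ⟨x, y, hxy, hEq⟩ := Finset.card_eq_two.mp h2
  have hvb : v ≠ b := (Finset.ne_of_mem_erase hb).symm
  have hVE : V = insert v (V.erase v) := (Finset.insert_erase hvV).symm
  rw [hEq] at hb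
  rcases Finset.mem_insert.mp hb with rfl | hb'
  · refine ⟨y, fun h => hxy h.symm, ?_, hvb, ?_⟩
    · intro h; apply Finset.notMem_erase v V; rw [hEq, ← h]; simp
    · rw [hVE, hEq, Finset.pair_comm]
  · have hby : b = y := Finset.mem_singleton.mp hb'
    subst hby
    refine ⟨x, hxy, ?_, hvb, ?_⟩
    · intro h; apply Finset.notMem_erase v V; rw [hEq, ← h]; simp
    · rw [hVE, hEq]

lemma decomp_pair {V : Finset E} (hV : V.card = 3) {p q : E} (hp : p ∈ V) (hq : q ∈ V)
    (hpq : p ≠ q) : ∃ r, p ≠ r ∧ q ≠ r ∧ V = {p, q, r} := by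
  have hq' : q ∈ V.erase p := Finset.mem_erase.mpr ⟨hpq.symm, hq⟩
  have h2 : ((V.erase p).erase q).card = 1 := by
    rw [Finset.card_erase_of_mem hq', Finset.card_erase_of_mem hp, hV]
  obtain ⟨r, hr⟩ := Finset.card_eq_one.mp h2
  have hrm : r ∈ (V.erase p).erase q := by rw [hr]; simp
  refine ⟨r, ?_, (Finset.ne_of_mem_erase hrm).symm, ?_⟩
  · exact (Finset.ne_of_mem_erase (Finset.mem_of_mem_erase hrm)).symm
  · rw [← Finset.insert_erase hp, ← Finset.insert_erase hq', hr]

lemma exists_low_degree (S : Finset (Finset E)) (hS : S.Nonempty)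
    (hsimp : ∀ V ∈ S, IsTriangle V)
    (hdisj : ∀ V ∈ S, ∀ W ∈ S, V ≠ W →
      Disjoint (interior (convexHull ℝ (V : Set E))) (interior (convexHull ℝ (W : Set E)))) :
    ∃ T ∈ S, ((S.erase T).filter (fun W => (T ∩ W).card = 2)).card ≤ 2 := by
  classical
  set P : Finset E := S.biUnion id with hP
  have hPmem : ∀ V ∈ S, ∀ p ∈ V, p ∈ P := fun V hV p hp =>
    Finset.mem_biUnion.mpr ⟨V, hV, hp⟩
  obtain ⟨V0, hV0⟩ := hS
  obtain ⟨p0, hp0⟩ : V0.Nonempty :=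
    Finset.card_pos.mp (by rw [(hsimp V0 hV0).1]; norm_num)
  have hPne : P.Nonempty := ⟨p0, hPmem V0 hV0 p0 hp0⟩
  obtain ⟨t, ht⟩ := exists_good_t P
  obtain ⟨v, hvP, hvmax⟩ := P.exists_max_image (Uc t) hPne
  have hvlt : ∀ p ∈ P, p ≠ v → 0 < Uc t v - Uc t p := fun p hp hne =>
    sub_pos.mpr (lt_of_le_of_ne (hvmax p hp) (ht p hp v hvP hne))
  set slope : E → ℝ := fun p => (Wc t p - Wc t v) / (Uc t v - Uc t p) with hslope
  set 𝒯 : Finset (Finset E) := S.filter (fun V => v ∈ V) with h𝒯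
  have h𝒯S : ∀ V ∈ 𝒯, V ∈ S := fun V hV => (Finset.mem_filter.mp hV).1
  have h𝒯v : ∀ V ∈ 𝒯, v ∈ V := fun V hV => (Finset.mem_filter.mp hV).2
  -- all non-v vertices of triangles at v
  set A : Finset E := 𝒯.biUnion (fun V => V.erase v) with hA
  have hAP : ∀ p ∈ A, p ∈ P ∧ p ≠ v := by
    intro p hp
    obtain ⟨V, hV, hpV⟩ := Finset.mem_biUnion.mp hp
    exact ⟨hPmem V (h𝒯S V hV) p (Finset.mem_of_mem_erase hpV),
      Finset.ne_of_mem_erase hpV⟩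
  have hAne : A.Nonempty := by
    obtain ⟨Vv, hVvS, hvVv⟩ : ∃ V ∈ S, v ∈ V := by
      rcases Finset.mem_biUnion.mp (hP ▸ hvP) with ⟨V, hV, hvV⟩
      exact ⟨V, hV, hvV⟩
    have hVv𝒯 : Vv ∈ 𝒯 := Finset.mem_filter.mpr ⟨hVvS, hvVv⟩
    obtain ⟨x, hx⟩ : (Vv.erase v).Nonempty := by
      apply Finset.card_pos.mp
      rw [Finset.card_erase_of_mem hvVv, (hsimp Vv hVvS).1]
      norm_num
    exact ⟨x, Finset.mem_biUnion.mpr ⟨Vv, hVv𝒯, hx⟩⟩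
  obtain ⟨b, hbA, hbmax⟩ := A.exists_max_image slope hAne
  obtain ⟨hbP, hbv⟩ := hAP b hbA
  have hub : 0 < Uc t v - Uc t b := hvlt b hbP hbv
  -- pick a triangle containing v and b
  obtain ⟨T, hT𝒯, hbT⟩ := Finset.mem_biUnion.mp hbA
  have hTS : T ∈ S := h𝒯S T hT𝒯
  have hTcard := (hsimp T hTS).1
  obtain ⟨a, hab, hva, hvb, hTeq⟩ := decomp_at hTcard (h𝒯v T hT𝒯) hbT
  have haA : a ∈ A := Finset.mem_biUnion.mpr
    ⟨T, hT𝒯, Finset.mem_erase.mpr ⟨hva.symm, by rw [hTeq]; simp⟩⟩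
  obtain ⟨haP, hav⟩ := hAP a haA
  have hua : 0 < Uc t v - Uc t a := hvlt a haP hav
  have hAIvab : AffineIndependent ℝ ![v, a, b] :=
    tri_indep (hsimp T hTS) hTeq hva hvb hab
  have hsab : slope a < slope b :=
    lt_of_le_of_ne (hbmax a haA) (slope_ne t hAIvab hua hub)
  -- Claim 1: no other triangle of S contains both v and b
  have claim1 : ∀ W ∈ S, W ≠ T → ¬(v ∈ W ∧ b ∈ W) := by
    rintro W hWS hWne ⟨hvW, hbW⟩
    have hW𝒯 : W ∈ 𝒯 := Finset.mem_filter.mpr ⟨hWS, hvW⟩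
    have hbW' : b ∈ W.erase v := Finset.mem_erase.mpr ⟨hbv, hbW⟩
    obtain ⟨c, hcb, hvc, _, hWeq⟩ := decomp_at (hsimp W hWS).1 hvW hbW'
    have hcA : c ∈ A := Finset.mem_biUnion.mpr
      ⟨W, hW𝒯, Finset.mem_erase.mpr ⟨hvc.symm, by rw [hWeq]; simp⟩⟩
    obtain ⟨hcP, hcv⟩ := hAP c hcA
    have huc : 0 < Uc t v - Uc t c := hvlt c hcP hcv
    have hAIvcb : AffineIndependent ℝ ![v, c, b] :=
      tri_indep (hsimp W hWS) hWeq hvc hvb hcb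
    have hscb : slope c < slope b :=
      lt_of_le_of_ne (hbmax c hcA) (slope_ne t hAIvcb huc hub)
    set s := (max (slope a) (slope c) + slope b) / 2 with hsdef
    have hmax : max (slope a) (slope c) < slope b := max_lt hsab hscb
    have hs1 : slope a < s := lt_of_le_of_lt (le_max_left _ _) (by rw [hsdef]; linarith)
    have hs2 : slope c < s := lt_of_le_of_lt (le_max_right _ _) (by rw [hsdef]; linarith)
    have hs3 : s < slope b := by rw [hsdef]; linarith
    have slope_def : ∀ p, slope p = (Wc t p - Wc t v) / (Uc t v - Uc t p) := fun p => rfl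
    rw [slope_def] at hs1 hs2
    rw [slope_def] at hs3
    have m1 : Wc t a - Wc t v < s * (Uc t v - Uc t a) := (div_lt_iff₀ hua).mp hs1
    have m3 : Wc t c - Wc t v < s * (Uc t v - Uc t c) := (div_lt_iff₀ huc).mp hs2
    have m2 : s * (Uc t v - Uc t b) < Wc t b - Wc t v := (lt_div_iff₀ hub).mp hs3
    obtain ⟨z, hz1, hz2⟩ := cone_overlap t hAIvab hAIvcb s hua hub huc hub m1 m2 m3 m2
    have hd := hdisj T hTS W hWS (Ne.symm hWne)
    have hTco : (T : Set E) = {v, a, b} := by rw [hTeq]; simp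
    have hWco : (W : Set E) = {v, c, b} := by rw [hWeq]; simp
    rw [hTco, hWco] at hd
    exact Set.disjoint_left.mp hd hz1 hz2
  -- Claim 2: no edge is shared by three triangles
  have claim2 : ∀ V1 ∈ S, ∀ V2 ∈ S, ∀ V3 ∈ S, V1 ≠ V2 → V1 ≠ V3 → V2 ≠ V3 →
      ∀ p q : E, p ≠ q → p ∈ V1 → q ∈ V1 → p ∈ V2 → q ∈ V2 → p ∈ V3 → q ∈ V3 → False := by
    intro V1 hV1 V2 hV2 V3 hV3 h12 h13 h23 p q hpq hp1 hq1 hp2 hq2 hp3 hq3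
    obtain ⟨r1, hpr1, hqr1, hV1eq⟩ := decomp_pair (hsimp V1 hV1).1 hp1 hq1 hpq
    obtain ⟨r2, hpr2, hqr2, hV2eq⟩ := decomp_pair (hsimp V2 hV2).1 hp2 hq2 hpq
    obtain ⟨r3, hpr3, hqr3, hV3eq⟩ := decomp_pair (hsimp V3 hV3).1 hp3 hq3 hpq
    have hAI1 := tri_indep (hsimp V1 hV1) hV1eq hpq hpr1 hqr1
    have hAI2 := tri_indep (hsimp V2 hV2) hV2eq hpq hpr2 hqr2
    have hAI3 := tri_indep (hsimp V3 hV3) hV3eq hpq hpr3 hqr3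
    have hco1 : (V1 : Set E) = {p, q, r1} := by rw [hV1eq]; simp
    have hco2 : (V2 : Set E) = {p, q, r2} := by rw [hV2eq]; simp
    have hco3 : (V3 : Set E) = {p, q, r3} := by rw [hV3eq]; simp
    rcases three_share_edge hAI1 hAI2 hAI3 with ⟨z, ha, hb⟩ | ⟨z, ha, hb⟩ | ⟨z, ha, hb⟩
    · have hd := hdisj V1 hV1 V2 hV2 h12
      rw [hco1, hco2] at hd
      exact Set.disjoint_left.mp hd ha hb
    · have hd := hdisj V1 hV1 V3 hV3 h13
      rw [hco1, hco3] at hd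
      exact Set.disjoint_left.mp hd ha hb
    · have hd := hdisj V2 hV2 V3 hV3 h23
      rw [hco2, hco3] at hd
      exact Set.disjoint_left.mp hd ha hb
  -- Conclusion: count the neighbours of T
  refine ⟨T, hTS, ?_⟩
  have hcount : ((S.erase T).filter (fun W => (T ∩ W).card = 2)).card ≤
      ({{v, a}, {a, b}} : Finset (Finset E)).card := by
    apply Finset.card_le_card_of_injOn (fun W => T ∩ W)
    · intro W hWN
      have hWe := Finset.mem_filter.mp hWN
      have hWS : W ∈ S := Finset.mem_of_mem_erase hWe.1
      have hWne : W ≠ T := Finset.ne_of_mem_erase hWe.1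
      have hsub : T ∩ W ⊆ ({v, a, b} : Finset E) := by
        rw [← hTeq]; exact Finset.inter_subset_left
      rcases pair_sub hsub hWe.2 with h | h | h
      · simp [h]
      · exfalso
        apply claim1 W hWS hWne
        constructor
        · have hm : v ∈ T ∩ W := by rw [h]; simp
          exact Finset.mem_of_mem_inter_right hm
        · have hm : b ∈ T ∩ W := by rw [h]; simp
          exact Finset.mem_of_mem_inter_right hm
      · simp [h]
    · intro W1 h1 W2 h2 heq
      by_contra hne
      have heq' : T ∩ W1 = T ∩ W2 := heq
      have h1' := Finset.mem_filter.mp (Finset.mem_coe.mp h1)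
      have h2' := Finset.mem_filter.mp (Finset.mem_coe.mp h2)
      have hW1S : W1 ∈ S := Finset.mem_of_mem_erase h1'.1
      have hW2S : W2 ∈ S := Finset.mem_of_mem_erase h2'.1
      have hW1T : W1 ≠ T := Finset.ne_of_mem_erase h1'.1
      have hW2T : W2 ≠ T := Finset.ne_of_mem_erase h2'.1
      obtain ⟨p, q, hpq, hpair⟩ := Finset.card_eq_two.mp h1'.2
      have hpm : p ∈ T ∩ W1 := by rw [hpair]; simp
      have hqm : q ∈ T ∩ W1 := by rw [hpair]; simp
      have hpm2 : p ∈ T ∩ W2 := by rw [← heq']; exact hpm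
      have hqm2 : q ∈ T ∩ W2 := by rw [← heq']; exact hqm
      exact claim2 T hTS W1 hW1S W2 hW2S hW1T.symm hW2T.symm hne p q hpq
        (Finset.mem_of_mem_inter_left hpm) (Finset.mem_of_mem_inter_left hqm)
        (Finset.mem_of_mem_inter_right hpm) (Finset.mem_of_mem_inter_right hqm)
        (Finset.mem_of_mem_inter_right hpm2) (Finset.mem_of_mem_inter_right hqm2)
  refine le_trans hcount (le_trans (Finset.card_insert_le _ _) (by simp))

lemma key (n : ℕ) : ∀ S : Finset (Finset E), S.card ≤ n →
    (∀ V ∈ S, IsTriangle V) →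
    (∀ V ∈ S, ∀ W ∈ S, V ≠ W →
      Disjoint (interior (convexHull ℝ (V : Set E))) (interior (convexHull ℝ (W : Set E)))) →
    ∃ c : Finset E → Fin 3,
      ∀ V ∈ S, ∀ W ∈ S, V ≠ W → (V ∩ W).card = 2 → c V ≠ c W := by
  induction n with
  | zero =>
    intro S hcard _ _
    have hS : S = ∅ := Finset.card_eq_zero.mp (Nat.le_zero.mp hcard)
    exact ⟨fun _ => 0, by simp [hS]⟩
  | succ n ih =>
    intro S hcard hsimp hdisj
    rcases S.eq_empty_or_nonempty with rfl | hne
    · exact ⟨fun _ => 0, by simp⟩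
    obtain ⟨T, hTS, hdeg⟩ := exists_low_degree S hne hsimp hdisj
    have hS'card : (S.erase T).card ≤ n := by
      rw [Finset.card_erase_of_mem hTS]
      omega
    obtain ⟨c', hc'⟩ := ih (S.erase T) hS'card
      (fun V hV => hsimp V (Finset.mem_of_mem_erase hV))
      (fun V hV W hW h => hdisj V (Finset.mem_of_mem_erase hV) W (Finset.mem_of_mem_erase hW) h)
    set N := (S.erase T).filter (fun W => (T ∩ W).card = 2) with hN
    have himg : (N.image c').card ≤ 2 := le_trans Finset.card_image_le hdeg
    have hcompl : 0 < (N.image c')ᶜ.card := by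
      rw [Finset.card_compl]
      have : Fintype.card (Fin 3) = 3 := by simp
      omega
    obtain ⟨k, hk⟩ := Finset.card_pos.mp hcompl
    have hknot : k ∉ N.image c' := Finset.mem_compl.mp hk
    refine ⟨fun V => if V = T then k else c' V, ?_⟩
    intro V hV W hW hVW hcard2
    by_cases hVT : V = T
    · subst hVT
      have hWT : W ≠ V := hVW.symm
      have hWN : W ∈ N := Finset.mem_filter.mpr
        ⟨Finset.mem_erase.mpr ⟨hWT, hW⟩, hcard2⟩
      simp only [if_pos rfl, if_neg hWT]
      intro h
      exact hknot (Finset.mem_image.mpr ⟨W, hWN, h.symm⟩)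
    · by_cases hWT : W = T
      · subst hWT
        have hVN : V ∈ N := Finset.mem_filter.mpr
          ⟨Finset.mem_erase.mpr ⟨hVT, hV⟩, by rwa [Finset.inter_comm] at hcard2⟩
        simp only [if_pos rfl, if_neg hVT]
        intro h
        exact hknot (Finset.mem_image.mpr ⟨V, hVN, h⟩)
      · simp only [if_neg hVT, if_neg hWT]
        exact hc' V (Finset.mem_erase.mpr ⟨hVT, hV⟩) W (Finset.mem_erase.mpr ⟨hWT, hW⟩)
          hVW hcard2

end

end TriColor

/-- Every finite collection of triangles in the plane with pairwise disjoint interiors,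
any two of which intersect in a common vertex, a common edge, or not at all, admits a
3-coloring in which triangles sharing an edge receive different colors. -/
theorem triangle_three_coloring (S : Finset (Finset (EuclideanSpace ℝ (Fin 2))))
    (hsimp : ∀ V ∈ S, IsTriangle V)
    (hdisj : ∀ V ∈ S, ∀ W ∈ S, V ≠ W →
      Disjoint (interior (convexHull ℝ (V : Set (EuclideanSpace ℝ (Fin 2)))))
        (interior (convexHull ℝ (W : Set (EuclideanSpace ℝ (Fin 2))))))
    (hface : ∀ V ∈ S, ∀ W ∈ S, V ≠ W →
      convexHull ℝ (V : Set (EuclideanSpace ℝ (Fin 2))) ∩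
          convexHull ℝ (W : Set (EuclideanSpace ℝ (Fin 2))) =
        convexHull ℝ ((V ∩ W : Finset (EuclideanSpace ℝ (Fin 2))) :
          Set (EuclideanSpace ℝ (Fin 2)))) :
    ∃ c : Finset (EuclideanSpace ℝ (Fin 2)) → Fin 3,
      ∀ V ∈ S, ∀ W ∈ S, V ≠ W → (V ∩ W).card = 2 → c V ≠ c W :=
  TriColor.key S.card S le_rfl hsimp hdisj
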